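/- Every discrete Morse function on a tree is cm-equivalent to a discrete Morse function on a path. -/

import Mathlib

/-- The data of a function on the simplices (vertices and edges) of a graph. -/
structure PreDMF (V : Type*) where
  f₀ : V → ℝ
  f₁ : Sym2 V → ℝ

/-- A discrete Morse function on a graph: weakly increasing on faces, at most 2-to-1,
and equal values only occur on vertex/incident-edge pairs. -/
def IsDMF {V : Type*} (G : SimpleGraph V) (F : PreDMF V) : Prop :=
  (∀ e ∈ G.edgeSet, ∀ v ∈ e, F.f₀ v ≤ F.f₁ e) ∧
  (∀ u v : V, F.f₀ u = F.f₀ v → u = v) ∧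
  (∀ e ∈ G.edgeSet, ∀ e' ∈ G.edgeSet, F.f₁ e = F.f₁ e' → e = e') ∧
  (∀ v : V, ∀ e ∈ G.edgeSet, F.f₀ v = F.f₁ e → v ∈ e)

/-- A critical 0-simplex (vertex): no edge shares its value. -/
def CritV {V : Type*} (G : SimpleGraph V) (F : PreDMF V) (v : V) : Prop :=
  ∀ e ∈ G.edgeSet, F.f₁ e ≠ F.f₀ v

/-- A critical 1-simplex (edge): no vertex shares its value. -/
def CritE {V : Type*} (G : SimpleGraph V) (F : PreDMF V) (e : Sym2 V) : Prop :=
  e ∈ G.edgeSet ∧ ∀ v : V, F.f₀ v ≠ F.f₁ e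

/-- The sublevel complex of level `c` (edges of value `≤ c`). -/
def lsub {V : Type*} (G : SimpleGraph V) (F : PreDMF V) (c : ℝ) : SimpleGraph V where
  Adj u w := G.Adj u w ∧ F.f₁ s(u, w) ≤ c
  symm := by
    constructor
    intro u w h
    exact ⟨h.1.symm, by rw [Sym2.eq_swap]; exact h.2⟩
  loopless := by
    constructor
    intro u h
    exact G.ne_of_adj h.1 rfl

/-- The strict sublevel complex `X_{c-ε}` (edges of value `< c`). -/
def ssub {V : Type*} (G : SimpleGraph V) (F : PreDMF V) (c : ℝ) : SimpleGraph V where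
  Adj u w := G.Adj u w ∧ F.f₁ s(u, w) < c
  symm := by
    constructor
    intro u w h
    exact ⟨h.1.symm, by rw [Sym2.eq_swap]; exact h.2⟩
  loopless := by
    constructor
    intro u h
    exact G.ne_of_adj h.1 rfl

/-- Component-merge (cm) equivalence between dMfs on trees: a value-preserving
bijection of simplices (vertices to vertices, edges to edges) that induces a bijection
between the connected components of every sublevel complex, and such that an edge of
critical value `a` merges two given components of the strict sublevel complex
`X_{a-ε}` if and only if its image merges the corresponding components. -/
def CmEquiv {V V' : Type*} (G : SimpleGraph V) (F : PreDMF V)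
    (G' : SimpleGraph V') (F' : PreDMF V')
    (φv : V → V') (φe : Sym2 V → Sym2 V') : Prop :=
  Function.Bijective φv ∧
  (∀ e ∈ G.edgeSet, φe e ∈ G'.edgeSet) ∧
  (∀ e₁ ∈ G.edgeSet, ∀ e₂ ∈ G.edgeSet, φe e₁ = φe e₂ → e₁ = e₂) ∧
  (∀ e' ∈ G'.edgeSet, ∃ e ∈ G.edgeSet, φe e = e') ∧
  (∀ v : V, F'.f₀ (φv v) = F.f₀ v) ∧
  (∀ e ∈ G.edgeSet, F'.f₁ (φe e) = F.f₁ e) ∧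
  (∀ (c : ℝ) (u w : V),
    (lsub G F c).Reachable u w ↔ (lsub G' F' c).Reachable (φv u) (φv w)) ∧
  (∀ e ∈ G.edgeSet, ∀ u ∈ e, ∃ u' ∈ φe e, (ssub G' F' (F.f₁ e)).Reachable (φv u) u') ∧
  (∀ e ∈ G.edgeSet, ∀ u' ∈ φe e, ∃ u ∈ e, (ssub G' F' (F.f₁ e)).Reachable u' (φv u))


section Helpers
open SimpleGraph List
variable {V : Type*}

open SimpleGraph List

variable {V : Type*}

lemma pair_infix_nil {u v : V} : ¬ ([u, v] <:+: ([] : List V)) := by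
  intro h
  have := h.sublist.length_le
  simp at this

/-- pair infix characterization on cons -/
lemma pair_infix_cons {a u v : V} {L : List V} :
    [u, v] <:+: (a :: L) ↔ (u = a ∧ L.head? = some v) ∨ [u, v] <:+: L := by
  rw [List.infix_cons_iff]
  constructor
  · rintro (h | h)
    · rw [List.cons_prefix_cons] at h
      obtain ⟨rfl, h2⟩ := h
      left
      refine ⟨rfl, ?_⟩
      obtain ⟨t, ht⟩ := h2
      cases L with
      | nil => simp at ht
      | cons b M =>
        simp only [List.cons_append] at ht
        injection ht with h1 _
        simp [h1]
    · right; exact h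
  · rintro (⟨rfl, h2⟩ | h)
    · left
      cases L with
      | nil => simp at h2
      | cons b M =>
        simp only [List.head?_cons, Option.some.injEq] at h2
        subst h2
        exact ⟨M, by simp⟩
    · right; exact h

lemma pair_infix_append {u v : V} {L1 L2 : List V} :
    [u, v] <:+: (L1 ++ L2) ↔
      [u, v] <:+: L1 ∨ [u, v] <:+: L2 ∨ (L1.getLast? = some u ∧ L2.head? = some v) := by
  induction L1 with
  | nil =>
    simp only [List.nil_append, List.getLast?_nil]
    constructor
    · intro h; right; left; exact h
    · rintro (h | h | ⟨h, _⟩)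
      · exact absurd h pair_infix_nil
      · exact h
      · simp at h
  | cons a M ih =>
    rw [List.cons_append, pair_infix_cons, ih, pair_infix_cons]
    cases M with
    | nil =>
      simp only [List.nil_append, List.head?_nil, List.getLast?_singleton]
      constructor
      · rintro (⟨rfl, h⟩ | h | h | ⟨h, h'⟩)
        · right; right; exact ⟨rfl, h⟩
        · exact absurd h pair_infix_nil
        · right; left; exact h
        · simp at h
      · rintro ((⟨rfl, h⟩ | h) | h | ⟨h, h'⟩)
        · simp at h
        · exact absurd h pair_infix_nil
        · right; right; left; exact h
        · simp only [Option.some.injEq] at h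
          left; exact ⟨h.symm, h'⟩
    | cons b N =>
      have hgl : (a :: b :: N).getLast? = (b :: N).getLast? := by
        simp [List.getLast?_cons_cons]
      rw [hgl]
      simp only [List.head?_cons]
      tauto

lemma pair_infix_map {W : Type*} {f : V → W} (hf : Function.Injective f) {u v : W} {L : List V} :
    [u, v] <:+: L.map f ↔ ∃ a b : V, u = f a ∧ v = f b ∧ [a, b] <:+: L := by
  induction L with
  | nil =>
    simp only [List.map_nil]
    constructor
    · intro h; exact absurd h pair_infix_nil
    · rintro ⟨a, b, _, _, h⟩
      exact absurd h pair_infix_nil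
  | cons c M ih =>
    rw [List.map_cons, pair_infix_cons, ih]
    simp only [pair_infix_cons]
    constructor
    · rintro (⟨rfl, h⟩ | ⟨a, b, rfl, rfl, h⟩)
      · cases M with
        | nil => simp at h
        | cons d N =>
          simp only [List.map_cons, List.head?_cons, Option.some.injEq] at h
          exact ⟨c, d, rfl, h.symm, Or.inl ⟨rfl, rfl⟩⟩
      · exact ⟨a, b, rfl, rfl, Or.inr h⟩
    · rintro ⟨a, b, rfl, rfl, (⟨rfl, h⟩ | h)⟩
      · left
        refine ⟨rfl, ?_⟩
        cases M with
        | nil => simp at h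
        | cons d N =>
          simp only [List.head?_cons, Option.some.injEq] at h
          subst h
          simp
      · right; exact ⟨a, b, rfl, rfl, h⟩

lemma pair_infix_mem {u v : V} {L : List V} (h : [u, v] <:+: L) : u ∈ L ∧ v ∈ L :=
  ⟨h.subset (by simp), h.subset (by simp)⟩

lemma pair_infix_indexOf [DecidableEq V] {u v : V} {L : List V} (hL : L.Nodup)
    (h : [u, v] <:+: L) : L.idxOf v = L.idxOf u + 1 := by
  obtain ⟨s, t, ht⟩ := h
  have ht' : L = s ++ (u :: v :: t) := by rw [← ht]; simp
  subst ht'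
  rw [List.nodup_append] at hL
  obtain ⟨hs, hcons, hdisj⟩ := hL
  have hu : u ∉ s := fun hu => hdisj u hu u (by simp) rfl
  have hv : v ∉ s := fun hv => hdisj v hv v (by simp) rfl
  have hvu : u ≠ v := by
    simp only [List.nodup_cons, List.mem_cons] at hcons
    exact fun hh => hcons.1 (Or.inl hh)
  rw [List.idxOf_append_of_notMem hu, List.idxOf_append_of_notMem hv,
    List.idxOf_cons_ne _ hvu, List.idxOf_cons_self, List.idxOf_cons_self]

lemma pair_infix_ne {u v : V} {L : List V} (hL : L.Nodup) (h : [u, v] <:+: L) : u ≠ v := by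
  have := h.sublist.nodup hL
  simp at this
  exact this
/-- The path graph determined by a list of vertices. -/
def ple (L : List V) : SimpleGraph V where
  Adj u v := ([u, v] <:+: L ∨ [v, u] <:+: L) ∧ u ≠ v
  symm := by
    constructor
    intro u v h
    exact ⟨h.1.symm, h.2.symm⟩
  loopless := ⟨fun u h => h.2 rfl⟩

lemma ple_adj {L : List V} {u v : V} :
    (ple L).Adj u v ↔ ([u, v] <:+: L ∨ [v, u] <:+: L) ∧ u ≠ v := Iff.rfl

lemma ple_adj_mem {L : List V} {u v : V} (h : (ple L).Adj u v) : u ∈ L ∧ v ∈ L := by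
  rcases h.1 with h1 | h1
  · exact pair_infix_mem h1
  · exact ⟨(pair_infix_mem h1).2, (pair_infix_mem h1).1⟩

lemma ple_mono_cons {a : V} {M : List V} : ple M ≤ ple (a :: M) := by
  intro x y h
  refine ⟨?_, h.2⟩
  rcases h.1 with h1 | h1
  · exact Or.inl (List.infix_cons_iff.mpr (Or.inr h1))
  · exact Or.inr (List.infix_cons_iff.mpr (Or.inr h1))

lemma ple_mono_append_left {L1 L2 : List V} : ple L1 ≤ ple (L1 ++ L2) := by
  intro x y h
  refine ⟨?_, h.2⟩
  rcases h.1 with h1 | h1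
  · exact Or.inl (pair_infix_append.mpr (Or.inl h1))
  · exact Or.inr (pair_infix_append.mpr (Or.inl h1))

lemma ple_mono_append_right {L1 L2 : List V} : ple L2 ≤ ple (L1 ++ L2) := by
  intro x y h
  refine ⟨?_, h.2⟩
  rcases h.1 with h1 | h1
  · exact Or.inl (pair_infix_append.mpr (Or.inr (Or.inl h1)))
  · exact Or.inr (pair_infix_append.mpr (Or.inr (Or.inl h1)))

lemma ple_reachable : ∀ {L : List V}, L.Nodup → ∀ {u}, u ∈ L → ∀ {v}, v ∈ L →
    (ple L).Reachable u v := by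
  intro L
  induction L with
  | nil => intro _ u hu; simp at hu
  | cons a M ih =>
    intro hnd u hu v hv
    have hndM : M.Nodup := (List.nodup_cons.mp hnd).2
    have haM : a ∉ M := (List.nodup_cons.mp hnd).1
    have key : ∀ w ∈ M, (ple (a :: M)).Reachable a w := by
      intro w hw
      cases M with
      | nil => simp at hw
      | cons b N =>
        have hab : (ple (a :: b :: N)).Adj a b := by
          refine ⟨Or.inl ⟨[], N, by simp⟩, ?_⟩
          intro h; exact haM (h ▸ List.mem_cons_self)
        exact hab.reachable.trans
          ((ih hndM (List.mem_cons_self) hw).mono ple_mono_cons)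
    rcases List.mem_cons.mp hu with rfl | hu'
    · rcases List.mem_cons.mp hv with rfl | hv'
      · exact Reachable.refl _
      · exact key v hv'
    · rcases List.mem_cons.mp hv with rfl | hv'
      · exact (key u hu').symm
      · exact (ih hndM hu' hv').mono ple_mono_cons

/-- Reachability preserves a predicate closed under adjacency. -/
lemma reach_invariant {K : SimpleGraph V} {p : V → Prop}
    (h : ∀ x y, K.Adj x y → p x → p y) {u v : V} (hr : K.Reachable u v) (hu : p u) : p v := by
  obtain ⟨w⟩ := hr
  induction w with
  | nil => exact hu
  | cons hadj w ih => exact ih (h _ _ hadj hu)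

lemma comap_walk_reach {p : V → Prop} {K : SimpleGraph V}
    (hcl : ∀ x y, K.Adj x y → p x → p y) :
    ∀ {x y : V}, K.Walk x y → ∀ (hx : p x) (hy : p y),
      (K.comap (Subtype.val : Subtype p → V)).Reachable ⟨x, hx⟩ ⟨y, hy⟩ := by
  intro x y w
  induction w with
  | nil => intro hx hy; exact Reachable.refl _
  | @cons x' y' z' hadj w ih =>
    intro hx hy
    have hm : p y' := hcl _ _ hadj hx
    exact (SimpleGraph.Adj.reachable
      (show (K.comap (Subtype.val : Subtype p → V)).Adj ⟨x', hx⟩ ⟨y', hm⟩ from hadj)).trans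
      (ih hm hy)

lemma comap_reachable {p : V → Prop} {K : SimpleGraph V}
    (hcl : ∀ x y, K.Adj x y → p x → p y) (a b : Subtype p) :
    (K.comap (Subtype.val : Subtype p → V)).Reachable a b ↔ K.Reachable ↑a ↑b := by
  constructor
  · intro h
    exact h.map (⟨Subtype.val, fun h => h⟩ : K.comap Subtype.val →g K)
  · intro h
    obtain ⟨w⟩ := h
    obtain ⟨a, ha⟩ := a
    obtain ⟨b, hb⟩ := b
    exact comap_walk_reach hcl w ha hb

lemma ple_bridge_oriented [DecidableEq V] {L : List V} (hL : L.Nodup) {x y : V}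
    (h : [x, y] <:+: L) : (ple L).IsBridge s(x, y) := by
  have hxy : x ≠ y := pair_infix_ne hL h
  have hadj : (ple L).Adj x y := ⟨Or.inl h, hxy⟩
  rw [SimpleGraph.isBridge_iff]
  intro hreach
  have hxL : x ∈ L := (pair_infix_mem h).1
  have hyL : y ∈ L := (pair_infix_mem h).2
  have hidx : L.idxOf y = L.idxOf x + 1 := pair_infix_indexOf hL h
  set p : V → Prop := fun z => L.idxOf z ≤ L.idxOf x with hp
  have hclosed : ∀ a b : V, (ple L \ SimpleGraph.fromEdgeSet {s(x, y)}).Adj a b → p a → p b := by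
    intro a b hab hpa
    have hadj' : (ple L).Adj a b := hab.1
    have hne : s(a, b) ≠ s(x, y) := by
      intro hh
      apply (SimpleGraph.sdiff_adj _ _ _ _).mp hab |>.2
      rw [SimpleGraph.fromEdgeSet_adj]
      exact ⟨hh ▸ rfl, hadj'.ne⟩
    have haL : a ∈ L := (ple_adj_mem hadj').1
    have hbL : b ∈ L := (ple_adj_mem hadj').2
    by_contra hpb
    simp only [hp, not_le] at hpa hpb
    rcases hadj'.1 with h1 | h1
    · have hib : L.idxOf b = L.idxOf a + 1 := pair_infix_indexOf hL h1
      have hax : L.idxOf a = L.idxOf x := by omega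
      have hby : L.idxOf b = L.idxOf y := by omega
      have : a = x := (List.idxOf_inj haL).mp hax
      have : b = y := (List.idxOf_inj hbL).mp hby
      exact hne (by subst_vars; rfl)
    · have hib : L.idxOf a = L.idxOf b + 1 := pair_infix_indexOf hL h1
      omega
  have hpx : p x := le_refl _
  have hpy : p y := reach_invariant hclosed hreach hpx
  simp only [hp, hidx] at hpy
  omega

lemma ple_acyclic [DecidableEq V] {L : List V} (hL : L.Nodup) : (ple L).IsAcyclic := by
  rw [SimpleGraph.isAcyclic_iff_forall_adj_isBridge]
  intro x y hxy
  rcases hxy.1 with h | h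
  · exact ple_bridge_oriented hL h
  · rw [Sym2.eq_swap]
    exact ple_bridge_oriented hL h

lemma ple_isTree [DecidableEq V] {L : List V} (hne : L ≠ []) (hL : L.Nodup)
    (hcov : ∀ v : V, v ∈ L) : (ple L).IsTree := by
  cases L with
  | nil => exact absurd rfl hne
  | cons a M =>
    haveI : Nonempty V := ⟨a⟩
    exact ⟨⟨fun u v => ple_reachable hL (hcov u) (hcov v)⟩, ple_acyclic hL⟩

lemma ple_degree [DecidableEq V] {L : List V} (hL : L.Nodup) (v : V) :
    {w : V | (ple L).Adj v w}.ncard ≤ 2 := by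
  classical
  have hsub : {w : V | (ple L).Adj v w} ⊆
      (fun i => L.getD i v) '' {L.idxOf v + 1, L.idxOf v - 1} := by
    intro w hw
    have hwL : w ∈ L := (ple_adj_mem hw).2
    have hvL : v ∈ L := (ple_adj_mem hw).1
    have hwlt : L.idxOf w < L.length := List.idxOf_lt_length_iff.mpr hwL
    have hgd : L.getD (L.idxOf w) v = w := by
      rw [List.getD_eq_getElem L v hwlt]
      exact List.getElem_idxOf hwlt
    rcases hw.1 with h1 | h1
    · have : L.idxOf w = L.idxOf v + 1 := pair_infix_indexOf hL h1
      exact ⟨L.idxOf w, by simp [this], hgd⟩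
    · have : L.idxOf v = L.idxOf w + 1 := pair_infix_indexOf hL h1
      exact ⟨L.idxOf w, by simp [show L.idxOf w = L.idxOf v - 1 by omega], hgd⟩
  calc {w : V | (ple L).Adj v w}.ncard
      ≤ ((fun i => L.getD i v) '' {L.idxOf v + 1, L.idxOf v - 1}).ncard := by
        exact Set.ncard_le_ncard hsub (((Set.finite_singleton _).insert _).image _)
    _ ≤ ({L.idxOf v + 1, L.idxOf v - 1} : Set ℕ).ncard :=
        Set.ncard_image_le (((Set.finite_singleton _).insert _))
    _ ≤ 2 := by
        apply le_trans (Set.ncard_insert_le _ _)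
        simp
lemma sym2_map_section {p : V → Prop} (r : V → Subtype p) (hr : ∀ (x : V) (h : p x), ↑(r x) = x)
    {e : Sym2 V} (he : ∀ x ∈ e, p x) : Sym2.map Subtype.val (Sym2.map r e) = e := by
  induction e using Sym2.ind with
  | _ x y =>
    rw [Sym2.map_pair_eq, Sym2.map_pair_eq, hr x (he x (by simp)), hr y (he y (by simp))]

lemma sym2_map_retract {p : V → Prop} (r : V → Subtype p) (hr : ∀ a : Subtype p, r ↑a = a)
    (e : Sym2 (Subtype p)) : Sym2.map r (Sym2.map Subtype.val e) = e := by
  induction e using Sym2.ind with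
  | _ a b => rw [Sym2.map_pair_eq, Sym2.map_pair_eq, hr a, hr b]

lemma sym2_map_val_p {p : V → Prop} (e : Sym2 (Subtype p)) :
    ∀ x ∈ Sym2.map (Subtype.val : Subtype p → V) e, p x := by
  intro x hx
  rw [Sym2.mem_map] at hx
  obtain ⟨a, _, rfl⟩ := hx
  exact a.2

lemma exists_adj_of_reachable {G : SimpleGraph V} {u v : V} (h : G.Reachable u v)
    (hne : u ≠ v) : ∃ w, G.Adj u w := by
  obtain ⟨wk⟩ := h
  cases wk with
  | nil => exact absurd rfl hne
  | cons h _ => exact ⟨_, h⟩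

lemma reach_or_of_walk {G H : SimpleGraph V} {u w : V}
    (hsub : ∀ x y, G.Adj x y → H.Adj x y ∨ (x = u ∧ y = w) ∨ (x = w ∧ y = u)) :
    ∀ {x y : V}, G.Walk x y → (H.Reachable y u ∨ H.Reachable y w) →
      (H.Reachable x u ∨ H.Reachable x w) := by
  intro x y wk
  induction wk with
  | nil => exact id
  | cons hadj wk ih =>
    intro h
    rcases hsub _ _ hadj with h1 | ⟨rfl, rfl⟩ | ⟨rfl, rfl⟩
    · rcases ih h with h2 | h2
      · exact Or.inl (h1.reachable.trans h2)
      · exact Or.inr (h1.reachable.trans h2)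
    · exact Or.inl (SimpleGraph.Reachable.refl _)
    · exact Or.inr (SimpleGraph.Reachable.refl _)

lemma sym2_exists_mem (e : Sym2 V) : ∃ z, z ∈ e := by
  induction e using Sym2.ind with
  | _ x y => exact ⟨x, by simp⟩

end Helpers

universe u

theorem Aux : ∀ (n : ℕ) (V : Type u) [Fintype V] (G : SimpleGraph V) (F : PreDMF V),
    Fintype.card V = n → G.IsTree → IsDMF G F →
    ∃ (L : List V) (F' : PreDMF V) (φe : Sym2 V → Sym2 V),
      L.Nodup ∧ (∀ v : V, v ∈ L) ∧ IsDMF (ple L) F' ∧ CmEquiv G F (ple L) F' id φe := by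
  intro n
  induction n using Nat.strong_induction_on with
  | _ n IH =>
  intro V _ G F hcard hT hF
  classical
  haveI hnV : Nonempty V := hT.isConnected.nonempty
  by_cases hcard1 : Fintype.card V ≤ 1
  · -- base case: at most one vertex
    haveI : Subsingleton V := Fintype.card_le_one_iff_subsingleton.mp hcard1
    obtain ⟨v0⟩ := hnV
    have hGedge : ∀ e, e ∉ G.edgeSet := by
      intro e
      induction e using Sym2.ind with
      | _ x y =>
        intro he
        rw [SimpleGraph.mem_edgeSet] at he
        exact G.ne_of_adj he (Subsingleton.elim x y)
    have hple : ∀ e, e ∉ (ple [v0]).edgeSet := by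
      intro e
      induction e using Sym2.ind with
      | _ x y =>
        intro he
        rw [SimpleGraph.mem_edgeSet] at he
        exact he.2 (Subsingleton.elim x y)
    refine ⟨[v0], F, id, List.nodup_singleton v0,
      fun v => by simp [Subsingleton.elim v v0], ?_, ?_⟩
    · exact ⟨fun e he => absurd he (hple e), hF.2.1,
        fun e he => absurd he (hple e), fun v e he => absurd he (hple e)⟩
    · refine ⟨Function.bijective_id, ?_, ?_, ?_, fun v => rfl, ?_, ?_, ?_, ?_⟩
      · intro e he; exact absurd he (hGedge e)
      · intro e he; exact absurd he (hGedge e)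
      · intro e' he'; exact absurd he' (hple e')
      · intro e he; exact absurd he (hGedge e)
      · intro c x y
        have hxy := Subsingleton.elim x y
        subst hxy
        exact iff_of_true (SimpleGraph.Reachable.refl _) (SimpleGraph.Reachable.refl _)
      · intro e he; exact absurd he (hGedge e)
      · intro e he; exact absurd he (hGedge e)
  · -- main case
    push_neg at hcard1
    haveI := Classical.decRel G.Adj
    -- a maximal edge
    have hedge_ne : G.edgeFinset.Nonempty := by
      obtain ⟨x, y, hxy⟩ := Fintype.one_lt_card_iff.mp hcard1
      obtain ⟨z, hz⟩ := exists_adj_of_reachable (hT.isConnected.preconnected x y) hxy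
      exact ⟨s(x, z), SimpleGraph.mem_edgeFinset.mpr hz⟩
    obtain ⟨emax, hemaxF, hmax⟩ := G.edgeFinset.exists_max_image F.f₁ hedge_ne
    obtain ⟨u, w, rfl⟩ : ∃ x y, emax = s(x, y) := by
      induction emax using Sym2.ind with
      | _ x y => exact ⟨x, y, rfl⟩
    have hemaxE : s(u, w) ∈ G.edgeSet := SimpleGraph.mem_edgeFinset.mp hemaxF
    have hadjuw : G.Adj u w := by rwa [SimpleGraph.mem_edgeSet] at hemaxE
    set fmax := F.f₁ s(u, w) with hfmax
    have hvalmax : ∀ e ∈ G.edgeSet, F.f₁ e ≤ fmax := by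
      intro e he
      exact hmax e (SimpleGraph.mem_edgeFinset.mpr he)
    have hvalltmax : ∀ e ∈ G.edgeSet, e ≠ s(u, w) → F.f₁ e < fmax := by
      intro e he hne
      rcases lt_or_eq_of_le (hvalmax e he) with h | h
      · exact h
      · exact absurd (hF.2.2.1 e he s(u, w) hemaxE h) hne
    -- remove the maximal edge
    set H := G \ SimpleGraph.fromEdgeSet {s(u, w)} with hH
    have hHadj : ∀ x y : V, H.Adj x y ↔ G.Adj x y ∧ s(x, y) ≠ s(u, w) := by
      intro x y
      rw [hH, SimpleGraph.sdiff_adj, SimpleGraph.fromEdgeSet_adj]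
      constructor
      · intro ⟨h1, h2⟩
        refine ⟨h1, fun hh => h2 ⟨by simp [hh], h1.ne⟩⟩
      · intro ⟨h1, h2⟩
        exact ⟨h1, fun hh => h2 (by simpa using hh.1)⟩
    have hbridge : ¬ H.Reachable u w := by
      have := (SimpleGraph.isAcyclic_iff_forall_adj_isBridge.mp hT.IsAcyclic) hadjuw
      rw [SimpleGraph.isBridge_iff] at this
      exact this
    set p : V → Prop := fun x => H.Reachable x u with hp
    have hpu : p u := SimpleGraph.Reachable.refl u
    have hpw : ¬ p w := fun h => hbridge h.symm
    have hclH : ∀ x y : V, H.Adj x y → p x → p y := fun x y h hx => (h.symm.reachable).trans hx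
    have hclHn : ∀ x y : V, H.Adj x y → ¬ p x → ¬ p y :=
      fun x y h hx hy => hx (hclH y x h.symm hy)
    have htot : ∀ x : V, p x ∨ H.Reachable x w := by
      intro x
      obtain ⟨wk⟩ := hT.isConnected.preconnected x u
      refine reach_or_of_walk ?_ wk (Or.inl hpu)
      intro x y hadj
      by_cases hcase : s(x, y) = s(u, w)
      · rcases Sym2.eq_iff.mp hcase with ⟨rfl, rfl⟩ | ⟨rfl, rfl⟩
        · exact Or.inr (Or.inl ⟨rfl, rfl⟩)
        · exact Or.inr (Or.inr ⟨rfl, rfl⟩)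
      · exact Or.inl ((hHadj x y).mpr ⟨hadj, hcase⟩)
    have htotB : ∀ x : V, ¬ p x → H.Reachable x w := by
      intro x hx
      rcases htot x with h | h
      · exact absurd h hx
      · exact h
    -- the two sides of the removed edge
    have hcardA : Fintype.card (Subtype p) < n := hcard ▸ Fintype.card_subtype_lt (x := w) hpw
    have hcardB : Fintype.card {x : V // ¬ p x} < n :=
      hcard ▸ Fintype.card_subtype_lt (x := u) (not_not_intro hpu)
    have hGAadj : ∀ a b : Subtype p,
        (H.comap (Subtype.val : Subtype p → V)).Adj a b ↔ G.Adj ↑a ↑b := by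
      intro a b
      constructor
      · intro h; exact ((hHadj _ _).mp h).1
      · intro h
        refine (hHadj _ _).mpr ⟨h, ?_⟩
        intro hh
        rcases Sym2.eq_iff.mp hh with ⟨ha, hb⟩ | ⟨ha, hb⟩
        · exact hpw (hb ▸ b.2)
        · exact hpw (ha ▸ a.2)
    have hGBadj : ∀ a b : {x : V // ¬ p x},
        (H.comap (Subtype.val : {x : V // ¬ p x} → V)).Adj a b ↔ G.Adj ↑a ↑b := by
      intro a b
      constructor
      · intro h; exact ((hHadj _ _).mp h).1
      · intro h
        refine (hHadj _ _).mpr ⟨h, ?_⟩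
        intro hh
        rcases Sym2.eq_iff.mp hh with ⟨ha, hb⟩ | ⟨ha, hb⟩
        · exact absurd hpu (ha ▸ a.2)
        · exact absurd hpu (hb ▸ b.2)
    haveI hneA : Nonempty (Subtype p) := ⟨⟨u, hpu⟩⟩
    haveI hneB : Nonempty {x : V // ¬ p x} := ⟨⟨w, hpw⟩⟩
    have htreeA : (H.comap (Subtype.val : Subtype p → V)).IsTree := by
      refine ⟨⟨fun a b => ?_⟩, ?_⟩
      · exact (comap_reachable hclH a b).mpr (a.2.trans b.2.symm)
      · intro v c hc
        exact hT.IsAcyclic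
          (c.map (⟨Subtype.val, fun {x y} h => ((hHadj _ _).mp h).1⟩ :
            (H.comap (Subtype.val : Subtype p → V)) →g G))
          (hc.map Subtype.val_injective)
    have htreeB : (H.comap (Subtype.val : {x : V // ¬ p x} → V)).IsTree := by
      refine ⟨⟨fun a b => ?_⟩, ?_⟩
      · exact (comap_reachable hclHn a b).mpr ((htotB _ a.2).trans (htotB _ b.2).symm)
      · intro v c hc
        exact hT.IsAcyclic
          (c.map (⟨Subtype.val, fun {x y} h => ((hHadj _ _).mp h).1⟩ :
            (H.comap (Subtype.val : {x : V // ¬ p x} → V)) →g G))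
          (hc.map Subtype.val_injective)
    set FA : PreDMF (Subtype p) :=
      ⟨fun a => F.f₀ ↑a, fun e => F.f₁ (Sym2.map Subtype.val e)⟩ with hFA
    set FB : PreDMF {x : V // ¬ p x} :=
      ⟨fun a => F.f₀ ↑a, fun e => F.f₁ (Sym2.map Subtype.val e)⟩ with hFB
    have hGAedge : ∀ e ∈ (H.comap (Subtype.val : Subtype p → V)).edgeSet,
        Sym2.map (Subtype.val) e ∈ G.edgeSet := by
      intro e
      induction e using Sym2.ind with
      | _ a b =>
        intro he
        rw [SimpleGraph.mem_edgeSet] at he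
        rw [Sym2.map_pair_eq, SimpleGraph.mem_edgeSet]
        exact (hGAadj a b).mp he
    have hGBedge : ∀ e ∈ (H.comap (Subtype.val : {x : V // ¬ p x} → V)).edgeSet,
        Sym2.map (Subtype.val) e ∈ G.edgeSet := by
      intro e
      induction e using Sym2.ind with
      | _ a b =>
        intro he
        rw [SimpleGraph.mem_edgeSet] at he
        rw [Sym2.map_pair_eq, SimpleGraph.mem_edgeSet]
        exact (hGBadj a b).mp he
    have hdmfA : IsDMF (H.comap (Subtype.val : Subtype p → V)) FA := by
      refine ⟨?_, ?_, ?_, ?_⟩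
      · intro e he v hv
        exact hF.1 _ (hGAedge e he) ↑v (Sym2.mem_map.mpr ⟨v, hv, rfl⟩)
      · intro a b h
        exact Subtype.ext (hF.2.1 _ _ h)
      · intro e he e' he' h
        exact Sym2.map.injective Subtype.val_injective
          (hF.2.2.1 _ (hGAedge e he) _ (hGAedge e' he') h)
      · intro v e he h
        have hm := hF.2.2.2 ↑v _ (hGAedge e he) h
        rw [Sym2.mem_map] at hm
        obtain ⟨y, hy, hyv⟩ := hm
        exact (Subtype.val_injective hyv) ▸ hy
    have hdmfB : IsDMF (H.comap (Subtype.val : {x : V // ¬ p x} → V)) FB := by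
      refine ⟨?_, ?_, ?_, ?_⟩
      · intro e he v hv
        exact hF.1 _ (hGBedge e he) ↑v (Sym2.mem_map.mpr ⟨v, hv, rfl⟩)
      · intro a b h
        exact Subtype.ext (hF.2.1 _ _ h)
      · intro e he e' he' h
        exact Sym2.map.injective Subtype.val_injective
          (hF.2.2.1 _ (hGBedge e he) _ (hGBedge e' he') h)
      · intro v e he h
        have hm := hF.2.2.2 ↑v _ (hGBedge e he) h
        rw [Sym2.mem_map] at hm
        obtain ⟨y, hy, hyv⟩ := hm
        exact (Subtype.val_injective hyv) ▸ hy
    obtain ⟨LA, F'A, φeA, hLAnd, hLAcov, hdmfA', hcmA⟩ :=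
      IH _ hcardA (Subtype p) (H.comap (Subtype.val : Subtype p → V)) FA rfl htreeA hdmfA
    obtain ⟨LB, F'B, φeB, hLBnd, hLBcov, hdmfB', hcmB⟩ :=
      IH _ hcardB {x : V // ¬ p x} (H.comap (Subtype.val : {x : V // ¬ p x} → V)) FB rfl
        htreeB hdmfB
    obtain ⟨-, hcmA2, hcmA3, hcmA4, hcmA5, hcmA6, hcmA7, hcmA8, hcmA9⟩ := hcmA
    obtain ⟨-, hcmB2, hcmB3, hcmB4, hcmB5, hcmB6, hcmB7, hcmB8, hcmB9⟩ := hcmB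
    have hcmA5' : ∀ a : Subtype p, F'A.f₀ a = FA.f₀ a := fun a => hcmA5 a
    have hcmB5' : ∀ a : {x : V // ¬ p x}, F'B.f₀ a = FB.f₀ a := fun a => hcmB5 a
    -- retractions
    set rA : V → Subtype p := fun x => if h : p x then ⟨x, h⟩ else ⟨u, hpu⟩ with hrA
    set rB : V → {x : V // ¬ p x} := fun x => if h : ¬ p x then ⟨x, h⟩ else ⟨w, hpw⟩ with hrB
    have hrAval : ∀ (x : V) (h : p x), ↑(rA x) = x := by
      intro x h; rw [hrA]; simp only [dif_pos h]
    have hrBval : ∀ (x : V) (h : ¬ p x), ↑(rB x) = x := by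
      intro x h; rw [hrB]; simp only [dif_pos h]
    have hrAsec : ∀ a : Subtype p, rA ↑a = a := by
      intro a; rw [hrA]; simp only [dif_pos a.2]
    have hrBsec : ∀ a : {x : V // ¬ p x}, rB ↑a = a := by
      intro a; rw [hrB]; simp only [dif_pos a.2]
    -- the lists
    have hLAne : LA ≠ [] := by
      intro h
      have := hLAcov ⟨u, hpu⟩
      rw [h] at this
      simp at this
    have hLBne : LB ≠ [] := by
      intro h
      have := hLBcov ⟨w, hpw⟩
      rw [h] at this
      simp at this
    set LA' : List V := LA.map Subtype.val with hLA'
    set LB' : List V := LB.map Subtype.val with hLB'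
    set L : List V := LA' ++ LB' with hL
    have hLA'mem : ∀ x ∈ LA', p x := by
      intro x hx
      rw [hLA', List.mem_map] at hx
      obtain ⟨a, _, rfl⟩ := hx
      exact a.2
    have hLB'mem : ∀ x ∈ LB', ¬ p x := by
      intro x hx
      rw [hLB', List.mem_map] at hx
      obtain ⟨a, _, rfl⟩ := hx
      exact a.2
    have hLA'nd : LA'.Nodup := hLAnd.map Subtype.val_injective
    have hLB'nd : LB'.Nodup := hLBnd.map Subtype.val_injective
    have hLnd : L.Nodup := by
      rw [hL, List.nodup_append]
      exact ⟨hLA'nd, hLB'nd, fun x hx y hy hxy => hLB'mem y hy (hxy ▸ hLA'mem x hx)⟩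
    have hLcov : ∀ v : V, v ∈ L := by
      intro v
      rw [hL, List.mem_append]
      by_cases h : p v
      · left; rw [hLA', List.mem_map]; exact ⟨⟨v, h⟩, hLAcov _, rfl⟩
      · right; rw [hLB', List.mem_map]; exact ⟨⟨v, h⟩, hLBcov _, rfl⟩
    set aendA : Subtype p := LA.getLast hLAne with haendA
    set bheadB : {x : V // ¬ p x} := LB.head hLBne with hbheadB
    have hgetlastA : LA'.getLast? = some ↑aendA := by
      rw [hLA', List.getLast?_map, List.getLast?_eq_getLast hLAne, haendA, Option.map_some]
    have hheadB : LB'.head? = some ↑bheadB := by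
      rw [hLB', List.head?_map, List.head?_eq_head hLBne, hbheadB, Option.map_some]
    set econn : Sym2 V := s((↑aendA : V), (↑bheadB : V)) with heconn
    set F' : PreDMF V := ⟨F.f₀, fun e =>
      if ∀ x ∈ e, p x then F'A.f₁ (Sym2.map rA e)
      else if ∀ x ∈ e, ¬ p x then F'B.f₁ (Sym2.map rB e)
      else fmax⟩ with hF'
    set φe : Sym2 V → Sym2 V := fun e =>
      if e = s(u, w) then econn
      else if ∀ x ∈ e, p x then Sym2.map Subtype.val (φeA (Sym2.map rA e))
      else Sym2.map Subtype.val (φeB (Sym2.map rB e)) with hφe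
    -- values of F'
    have hvalA' : ∀ eA : Sym2 (Subtype p), F'.f₁ (Sym2.map Subtype.val eA) = F'A.f₁ eA := by
      intro eA
      simp only [hF']
      rw [if_pos (sym2_map_val_p eA), sym2_map_retract rA hrAsec]
    have hvalB' : ∀ eB : Sym2 {x : V // ¬ p x},
        F'.f₁ (Sym2.map Subtype.val eB) = F'B.f₁ eB := by
      intro eB
      have h1 : ¬ ∀ x ∈ Sym2.map Subtype.val eB, p x := by
        induction eB using Sym2.ind with
        | _ a b =>
          intro hh
          exact a.2 (hh ↑a (by rw [Sym2.map_pair_eq]; simp))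
      simp only [hF']
      rw [if_neg h1, if_pos (sym2_map_val_p eB), sym2_map_retract rB hrBsec]
    have hvalconn : F'.f₁ econn = fmax := by
      have h1 : ¬ ∀ x ∈ econn, p x := fun hh => bheadB.2 (hh ↑bheadB (by rw [heconn]; simp))
      have h2 : ¬ ∀ x ∈ econn, ¬ p x := fun hh => (hh ↑aendA (by rw [heconn]; simp)) aendA.2
      simp only [hF']
      rw [if_neg h1, if_neg h2]
    -- edge classification in G
    have hGclass : ∀ x y : V, G.Adj x y → s(x, y) ≠ s(u, w) →
        ((p x ∧ p y) ∨ (¬ p x ∧ ¬ p y)) := by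
      intro x y hadj hne
      have hHa : H.Adj x y := (hHadj _ _).mpr ⟨hadj, hne⟩
      by_cases h : p x
      · exact Or.inl ⟨h, hclH _ _ hHa h⟩
      · exact Or.inr ⟨h, hclHn _ _ hHa h⟩
    -- lifting edges of G within each side
    have hliftA : ∀ e ∈ G.edgeSet, (∀ x ∈ e, p x) →
        Sym2.map rA e ∈ (H.comap (Subtype.val : Subtype p → V)).edgeSet ∧
        Sym2.map Subtype.val (Sym2.map rA e) = e ∧ e ≠ s(u, w) := by
      intro e
      induction e using Sym2.ind with
      | _ x y =>
        intro he hall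
        have hx := hall x (by simp)
        have hy := hall y (by simp)
        have hne : s(x, y) ≠ s(u, w) := fun hh => hpw (hall w (by rw [hh]; simp))
        refine ⟨?_, sym2_map_section rA hrAval hall, hne⟩
        rw [SimpleGraph.mem_edgeSet] at he
        rw [Sym2.map_pair_eq, SimpleGraph.mem_edgeSet, hGAadj, hrAval x hx, hrAval y hy]
        exact he
    have hliftB : ∀ e ∈ G.edgeSet, (∀ x ∈ e, ¬ p x) →
        Sym2.map rB e ∈ (H.comap (Subtype.val : {x : V // ¬ p x} → V)).edgeSet ∧
        Sym2.map Subtype.val (Sym2.map rB e) = e ∧ e ≠ s(u, w) := by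
      intro e
      induction e using Sym2.ind with
      | _ x y =>
        intro he hall
        have hx := hall x (by simp)
        have hy := hall y (by simp)
        have hne : s(x, y) ≠ s(u, w) := fun hh => (hall u (by rw [hh]; simp)) hpu
        refine ⟨?_, sym2_map_section rB hrBval hall, hne⟩
        rw [SimpleGraph.mem_edgeSet] at he
        rw [Sym2.map_pair_eq, SimpleGraph.mem_edgeSet, hGBadj, hrBval x hx, hrBval y hy]
        exact he
    -- adjacency of mapped lists
    have hpleA'mem_adj : ∀ a b : Subtype p, (ple LA').Adj ↑a ↑b ↔ (ple LA).Adj a b := by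
      intro a b
      rw [ple_adj, ple_adj (L := LA)]
      constructor
      · rintro ⟨h | h, hne⟩
        · rw [hLA', pair_infix_map Subtype.val_injective] at h
          obtain ⟨a', b', ha, hb, h⟩ := h
          obtain rfl : a' = a := Subtype.val_injective ha.symm
          obtain rfl : b' = b := Subtype.val_injective hb.symm
          exact ⟨Or.inl h, fun hh => hne (congrArg _ hh)⟩
        · rw [hLA', pair_infix_map Subtype.val_injective] at h
          obtain ⟨b', a', hb, ha, h⟩ := h
          obtain rfl : a' = a := Subtype.val_injective ha.symm
          obtain rfl : b' = b := Subtype.val_injective hb.symm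
          exact ⟨Or.inr h, fun hh => hne (congrArg _ hh)⟩
      · rintro ⟨h | h, hne⟩
        · refine ⟨Or.inl ?_, Subtype.val_injective.ne hne⟩
          rw [hLA']
          exact (pair_infix_map Subtype.val_injective).mpr ⟨a, b, rfl, rfl, h⟩
        · refine ⟨Or.inr ?_, Subtype.val_injective.ne hne⟩
          rw [hLA']
          exact (pair_infix_map Subtype.val_injective).mpr ⟨b, a, rfl, rfl, h⟩
    have hpleB'mem_adj : ∀ a b : {x : V // ¬ p x},
        (ple LB').Adj ↑a ↑b ↔ (ple LB).Adj a b := by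
      intro a b
      rw [ple_adj, ple_adj (L := LB)]
      constructor
      · rintro ⟨h | h, hne⟩
        · rw [hLB', pair_infix_map Subtype.val_injective] at h
          obtain ⟨a', b', ha, hb, h⟩ := h
          obtain rfl : a' = a := Subtype.val_injective ha.symm
          obtain rfl : b' = b := Subtype.val_injective hb.symm
          exact ⟨Or.inl h, fun hh => hne (congrArg _ hh)⟩
        · rw [hLB', pair_infix_map Subtype.val_injective] at h
          obtain ⟨b', a', hb, ha, h⟩ := h
          obtain rfl : a' = a := Subtype.val_injective ha.symm
          obtain rfl : b' = b := Subtype.val_injective hb.symm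
          exact ⟨Or.inr h, fun hh => hne (congrArg _ hh)⟩
      · rintro ⟨h | h, hne⟩
        · refine ⟨Or.inl ?_, Subtype.val_injective.ne hne⟩
          rw [hLB']
          exact (pair_infix_map Subtype.val_injective).mpr ⟨a, b, rfl, rfl, h⟩
        · refine ⟨Or.inr ?_, Subtype.val_injective.ne hne⟩
          rw [hLB']
          exact (pair_infix_map Subtype.val_injective).mpr ⟨b, a, rfl, rfl, h⟩
    have hpleA'adj : ∀ x y : V, (ple LA').Adj x y →
        ∃ a b : Subtype p, x = ↑a ∧ y = ↑b ∧ (ple LA).Adj a b := by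
      intro x y hadj
      have hx : p x := hLA'mem x (ple_adj_mem hadj).1
      have hy : p y := hLA'mem y (ple_adj_mem hadj).2
      refine ⟨⟨x, hx⟩, ⟨y, hy⟩, rfl, rfl, ?_⟩
      exact (hpleA'mem_adj ⟨x, hx⟩ ⟨y, hy⟩).mp hadj
    have hpleB'adj : ∀ x y : V, (ple LB').Adj x y →
        ∃ a b : {x : V // ¬ p x}, x = ↑a ∧ y = ↑b ∧ (ple LB).Adj a b := by
      intro x y hadj
      have hx : ¬ p x := hLB'mem x (ple_adj_mem hadj).1
      have hy : ¬ p y := hLB'mem y (ple_adj_mem hadj).2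
      refine ⟨⟨x, hx⟩, ⟨y, hy⟩, rfl, rfl, ?_⟩
      exact (hpleB'mem_adj ⟨x, hx⟩ ⟨y, hy⟩).mp hadj
    -- classification of edges of ple L
    have hG'class : ∀ x y : V, (ple L).Adj x y →
        ((ple LA').Adj x y ∨ (ple LB').Adj x y ∨ s(x, y) = econn) := by
      intro x y hadj
      obtain ⟨hpair, hne⟩ := hadj
      rcases hpair with h | h
      · rw [hL, pair_infix_append] at h
        rcases h with h | h | ⟨h1, h2⟩
        · exact Or.inl ⟨Or.inl h, hne⟩
        · exact Or.inr (Or.inl ⟨Or.inl h, hne⟩)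
        · right; right
          rw [hgetlastA, Option.some.injEq] at h1
          rw [hheadB, Option.some.injEq] at h2
          rw [heconn, ← h1, ← h2]
      · rw [hL, pair_infix_append] at h
        rcases h with h | h | ⟨h1, h2⟩
        · exact Or.inl ⟨Or.inr h, hne⟩
        · exact Or.inr (Or.inl ⟨Or.inr h, hne⟩)
        · right; right
          rw [hgetlastA, Option.some.injEq] at h1
          rw [hheadB, Option.some.injEq] at h2
          rw [heconn, ← h1, ← h2, Sym2.eq_swap]
    -- unfolding φe
    have hφemax : φe s(u, w) = econn := by
      simp [hφe]
    have hGclassE : ∀ e ∈ G.edgeSet, e ≠ s(u, w) →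
        ((∀ x ∈ e, p x) ∨ (∀ x ∈ e, ¬ p x)) := by
      intro e
      induction e using Sym2.ind with
      | _ x y =>
        intro he hne
        rw [SimpleGraph.mem_edgeSet] at he
        rcases hGclass x y he hne with ⟨h1, h2⟩ | ⟨h1, h2⟩
        · left; intro z hz; rcases Sym2.mem_iff.mp hz with rfl | rfl <;> assumption
        · right; intro z hz; rcases Sym2.mem_iff.mp hz with rfl | rfl <;> assumption
    have hφeAdef : ∀ e ∈ G.edgeSet, (∀ x ∈ e, p x) →
        φe e = Sym2.map Subtype.val (φeA (Sym2.map rA e)) := by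
      intro e he hall
      simp only [hφe]
      rw [if_neg (hliftA e he hall).2.2, if_pos hall]
    have hφeBdef : ∀ e ∈ G.edgeSet, (∀ x ∈ e, ¬ p x) →
        φe e = Sym2.map Subtype.val (φeB (Sym2.map rB e)) := by
      intro e
      induction e using Sym2.ind with
      | _ x y =>
        intro he hall
        have hnp : ¬ ∀ z ∈ s(x, y), p z := fun hh => (hall x (by simp)) (hh x (by simp))
        simp only [hφe]
        rw [if_neg (hliftB _ he hall).2.2, if_neg hnp]
    -- the connecting edge is an edge of ple L
    have hconnadj : (ple L).Adj ↑aendA ↑bheadB := by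
      refine ⟨Or.inl ?_, ?_⟩
      · rw [hL, pair_infix_append]
        exact Or.inr (Or.inr ⟨hgetlastA, hheadB⟩)
      · intro hh
        exact bheadB.2 (hh ▸ aendA.2)
    have hleA : ple LA' ≤ ple L := by rw [hL]; exact ple_mono_append_left
    have hleB : ple LB' ≤ ple L := by rw [hL]; exact ple_mono_append_right
    have hmemA' : ∀ eA ∈ (ple LA).edgeSet,
        Sym2.map Subtype.val eA ∈ (ple LA').edgeSet := by
      intro eA
      induction eA using Sym2.ind with
      | _ a b =>
        intro he
        rw [SimpleGraph.mem_edgeSet] at he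
        rw [Sym2.map_pair_eq, SimpleGraph.mem_edgeSet]
        exact (hpleA'mem_adj a b).mpr he
    have hmemB' : ∀ eB ∈ (ple LB).edgeSet,
        Sym2.map Subtype.val eB ∈ (ple LB').edgeSet := by
      intro eB
      induction eB using Sym2.ind with
      | _ a b =>
        intro he
        rw [SimpleGraph.mem_edgeSet] at he
        rw [Sym2.map_pair_eq, SimpleGraph.mem_edgeSet]
        exact (hpleB'mem_adj a b).mpr he
    -- φe maps edges to edges, preserving values
    have hφe_edge : ∀ e ∈ G.edgeSet, φe e ∈ (ple L).edgeSet ∧ F'.f₁ (φe e) = F.f₁ e := by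
      intro e he
      by_cases hcase : e = s(u, w)
      · subst hcase
        rw [hφemax]
        constructor
        · rw [heconn, SimpleGraph.mem_edgeSet]; exact hconnadj
        · rw [hvalconn]
      · rcases hGclassE e he hcase with hall | hall
        · rw [hφeAdef e he hall]
          obtain ⟨hmem, hsec, -⟩ := hliftA e he hall
          have h1 : φeA (Sym2.map rA e) ∈ (ple LA).edgeSet := hcmA2 _ hmem
          constructor
          · exact SimpleGraph.edgeSet_mono hleA (hmemA' _ h1)
          · rw [hvalA' (φeA (Sym2.map rA e)), hcmA6 _ hmem]
            show F.f₁ (Sym2.map Subtype.val (Sym2.map rA e)) = F.f₁ e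
            rw [hsec]
        · rw [hφeBdef e he hall]
          obtain ⟨hmem, hsec, -⟩ := hliftB e he hall
          have h1 : φeB (Sym2.map rB e) ∈ (ple LB).edgeSet := hcmB2 _ hmem
          constructor
          · exact SimpleGraph.edgeSet_mono hleB (hmemB' _ h1)
          · rw [hvalB' (φeB (Sym2.map rB e)), hcmB6 _ hmem]
            show F.f₁ (Sym2.map Subtype.val (Sym2.map rB e)) = F.f₁ e
            rw [hsec]
    -- surjectivity of φe onto edges of ple L
    have hφe_surj : ∀ e' ∈ (ple L).edgeSet, ∃ e ∈ G.edgeSet, φe e = e' := by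
      intro e'
      induction e' using Sym2.ind with
      | _ x y =>
        intro he'
        rw [SimpleGraph.mem_edgeSet] at he'
        rcases hG'class x y he' with h | h | h
        · obtain ⟨a, b, rfl, rfl, hab⟩ := hpleA'adj x y h
          obtain ⟨eA, heA, hφeA_eq⟩ := hcmA4 s(a, b) ((SimpleGraph.mem_edgeSet _).mpr hab)
          refine ⟨Sym2.map Subtype.val eA, hGAedge _ heA, ?_⟩
          rw [hφeAdef _ (hGAedge _ heA) (sym2_map_val_p eA),
            sym2_map_retract rA hrAsec, hφeA_eq, Sym2.map_pair_eq]
        · obtain ⟨a, b, rfl, rfl, hab⟩ := hpleB'adj x y h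
          obtain ⟨eB, heB, hφeB_eq⟩ := hcmB4 s(a, b) ((SimpleGraph.mem_edgeSet _).mpr hab)
          refine ⟨Sym2.map Subtype.val eB, hGBedge _ heB, ?_⟩
          rw [hφeBdef _ (hGBedge _ heB) (sym2_map_val_p eB),
            sym2_map_retract rB hrBsec, hφeB_eq, Sym2.map_pair_eq]
        · exact ⟨s(u, w), hemaxE, by rw [hφemax]; exact h.symm⟩
    -- injectivity of φe on edges
    have hφe_inj : ∀ e₁ ∈ G.edgeSet, ∀ e₂ ∈ G.edgeSet, φe e₁ = φe e₂ → e₁ = e₂ := by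
      have hmixA : ∀ e₂ ∈ G.edgeSet, e₂ ≠ s(u, w) → (∀ x ∈ e₂, p x) → econn = φe e₂ → False := by
        intro e₂ h₂ hc2 hall heq
        rw [hφeAdef e₂ h₂ hall] at heq
        have hm : (↑bheadB : V) ∈ Sym2.map Subtype.val (φeA (Sym2.map rA e₂)) := by
          rw [← heq, heconn]; simp
        exact bheadB.2 (sym2_map_val_p _ _ hm)
      have hmixB : ∀ e₂ ∈ G.edgeSet, e₂ ≠ s(u, w) → (∀ x ∈ e₂, ¬ p x) → econn = φe e₂ → False := by
        intro e₂ h₂ hc2 hall heq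
        rw [hφeBdef e₂ h₂ hall] at heq
        have hm : (↑aendA : V) ∈ Sym2.map Subtype.val (φeB (Sym2.map rB e₂)) := by
          rw [← heq, heconn]; simp
        exact (sym2_map_val_p _ _ hm) aendA.2
      have hmixmax : ∀ e₂ ∈ G.edgeSet, e₂ ≠ s(u, w) → econn = φe e₂ → False := by
        intro e₂ h₂ hc2 heq
        rcases hGclassE e₂ h₂ hc2 with hall | hall
        · exact hmixA e₂ h₂ hc2 hall heq
        · exact hmixB e₂ h₂ hc2 hall heq
      intro e₁ h₁ e₂ h₂ heq
      by_cases hc1 : e₁ = s(u, w) <;> by_cases hc2 : e₂ = s(u, w)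
      · rw [hc1, hc2]
      · exfalso
        subst hc1
        rw [hφemax] at heq
        exact hmixmax e₂ h₂ hc2 heq
      · exfalso
        subst hc2
        rw [hφemax] at heq
        exact hmixmax e₁ h₁ hc1 heq.symm
      · rcases hGclassE e₁ h₁ hc1 with hall1 | hall1 <;>
          rcases hGclassE e₂ h₂ hc2 with hall2 | hall2
        · rw [hφeAdef e₁ h₁ hall1, hφeAdef e₂ h₂ hall2] at heq
          have h3 := Sym2.map.injective Subtype.val_injective heq
          have h4 := hcmA3 _ (hliftA e₁ h₁ hall1).1 _ (hliftA e₂ h₂ hall2).1 h3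
          have h5 := congrArg (Sym2.map (Subtype.val : Subtype p → V)) h4
          rwa [(hliftA e₁ h₁ hall1).2.1, (hliftA e₂ h₂ hall2).2.1] at h5
        · exfalso
          rw [hφeAdef e₁ h₁ hall1, hφeBdef e₂ h₂ hall2] at heq
          obtain ⟨z, hz⟩ := sym2_exists_mem (Sym2.map Subtype.val (φeA (Sym2.map rA e₁)))
          exact (sym2_map_val_p _ z (heq ▸ hz)) (sym2_map_val_p _ z hz)
        · exfalso
          rw [hφeBdef e₁ h₁ hall1, hφeAdef e₂ h₂ hall2] at heq
          obtain ⟨z, hz⟩ := sym2_exists_mem (Sym2.map Subtype.val (φeB (Sym2.map rB e₁)))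
          exact (sym2_map_val_p _ z hz) (sym2_map_val_p _ z (heq ▸ hz))
        · rw [hφeBdef e₁ h₁ hall1, hφeBdef e₂ h₂ hall2] at heq
          have h3 := Sym2.map.injective Subtype.val_injective heq
          have h4 := hcmB3 _ (hliftB e₁ h₁ hall1).1 _ (hliftB e₂ h₂ hall2).1 h3
          have h5 := congrArg (Sym2.map (Subtype.val : {x : V // ¬ p x} → V)) h4
          rwa [(hliftB e₁ h₁ hall1).2.1, (hliftB e₂ h₂ hall2).2.1] at h5
    -- closure of the sides under sublevel adjacency
    have hclKG : ∀ c : ℝ, c < fmax → ∀ x y : V, (lsub G F c).Adj x y → p x → p y := by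
      intro c hc x y hxy hx
      have hne : s(x, y) ≠ s(u, w) := by
        intro hh
        have h2 := hxy.2
        rw [hh] at h2
        exact absurd h2 (not_le.mpr hc)
      exact hclH x y ((hHadj x y).mpr ⟨hxy.1, hne⟩) hx
    have hclKGn : ∀ c : ℝ, c < fmax → ∀ x y : V, (lsub G F c).Adj x y → ¬ p x → ¬ p y :=
      fun c hc x y hxy hx hy => hx (hclKG c hc y x hxy.symm hy)
    have hclKG' : ∀ c : ℝ, c < fmax → ∀ x y : V, (lsub (ple L) F' c).Adj x y → p x → p y := by
      intro c hc x y hxy hx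
      rcases hG'class x y hxy.1 with h | h | h
      · exact hLA'mem y (ple_adj_mem h).2
      · exact absurd hx (hLB'mem x (ple_adj_mem h).1)
      · exfalso
        have h2 := hxy.2
        rw [h, hvalconn] at h2
        exact absurd h2 (not_le.mpr hc)
    have hclKG'n : ∀ c : ℝ, c < fmax → ∀ x y : V, (lsub (ple L) F' c).Adj x y → ¬ p x → ¬ p y :=
      fun c hc x y hxy hx hy => hx (hclKG' c hc y x hxy.symm hy)
    -- transfer of sublevel reachability, G side
    have hlsubGA : ∀ c : ℝ, c < fmax → ∀ a b : Subtype p,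
        (lsub (H.comap (Subtype.val : Subtype p → V)) FA c).Reachable a b ↔
          (lsub G F c).Reachable ↑a ↑b := by
      intro c hc a b
      have hgraph : lsub (H.comap (Subtype.val : Subtype p → V)) FA c =
          (lsub G F c).comap (Subtype.val : Subtype p → V) := by
        ext a b
        constructor
        · rintro ⟨hadj, hval⟩
          refine ⟨(hGAadj a b).mp hadj, ?_⟩
          have hfa : FA.f₁ s(a, b) = F.f₁ s((↑a : V), ↑b) := by
            rw [hFA]
            simp only
            rw [Sym2.map_pair_eq]
          rwa [hfa] at hval
        · rintro ⟨hadj, hval⟩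
          have hne : s((↑a : V), ↑b) ≠ s(u, w) := by
            intro hh
            rcases Sym2.eq_iff.mp hh with ⟨ha, hb⟩ | ⟨ha, hb⟩
            · exact hpw (hb ▸ b.2)
            · exact hpw (ha ▸ a.2)
          refine ⟨(hHadj _ _).mpr ⟨hadj, hne⟩, ?_⟩
          have hfa : FA.f₁ s(a, b) = F.f₁ s((↑a : V), ↑b) := by
            rw [hFA]
            simp only
            rw [Sym2.map_pair_eq]
          rwa [← hfa] at hval
      rw [hgraph]
      exact comap_reachable (hclKG c hc) a b
    have hlsubGB : ∀ c : ℝ, c < fmax → ∀ a b : {x : V // ¬ p x},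
        (lsub (H.comap (Subtype.val : {x : V // ¬ p x} → V)) FB c).Reachable a b ↔
          (lsub G F c).Reachable ↑a ↑b := by
      intro c hc a b
      have hgraph : lsub (H.comap (Subtype.val : {x : V // ¬ p x} → V)) FB c =
          (lsub G F c).comap (Subtype.val : {x : V // ¬ p x} → V) := by
        ext a b
        constructor
        · rintro ⟨hadj, hval⟩
          refine ⟨(hGBadj a b).mp hadj, ?_⟩
          have hfa : FB.f₁ s(a, b) = F.f₁ s((↑a : V), ↑b) := by
            rw [hFB]
            simp only
            rw [Sym2.map_pair_eq]
          rwa [hfa] at hval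
        · rintro ⟨hadj, hval⟩
          have hne : s((↑a : V), ↑b) ≠ s(u, w) := by
            intro hh
            rcases Sym2.eq_iff.mp hh with ⟨ha, hb⟩ | ⟨ha, hb⟩
            · exact absurd hpu (ha ▸ a.2)
            · exact absurd hpu (hb ▸ b.2)
          refine ⟨(hHadj _ _).mpr ⟨hadj, hne⟩, ?_⟩
          have hfa : FB.f₁ s(a, b) = F.f₁ s((↑a : V), ↑b) := by
            rw [hFB]
            simp only
            rw [Sym2.map_pair_eq]
          rwa [← hfa] at hval
      rw [hgraph]
      exact comap_reachable (hclKGn c hc) a b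
    -- transfer of sublevel reachability, ple side
    have hlsubA' : ∀ c : ℝ, c < fmax → ∀ a b : Subtype p,
        (lsub (ple LA) F'A c).Reachable a b ↔ (lsub (ple L) F' c).Reachable ↑a ↑b := by
      intro c hc a b
      have hgraph : lsub (ple LA) F'A c =
          (lsub (ple L) F' c).comap (Subtype.val : Subtype p → V) := by
        ext a b
        constructor
        · rintro ⟨hadj, hval⟩
          refine ⟨hleA ((hpleA'mem_adj a b).mpr hadj), ?_⟩
          have hv : F'.f₁ s((↑a : V), ↑b) = F'A.f₁ s(a, b) := by
            rw [← Sym2.map_pair_eq Subtype.val]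
            exact hvalA' s(a, b)
          rw [hv]
          exact hval
        · rintro ⟨hadj, hval⟩
          rcases hG'class _ _ hadj with h | h | h
          · refine ⟨(hpleA'mem_adj a b).mp h, ?_⟩
            rwa [← Sym2.map_pair_eq Subtype.val, hvalA'] at hval
          · exact absurd a.2 (hLB'mem _ (ple_adj_mem h).1)
          · exfalso
            rw [h, hvalconn] at hval
            exact absurd hval (not_le.mpr hc)
      rw [hgraph]
      exact comap_reachable (hclKG' c hc) a b
    have hlsubB' : ∀ c : ℝ, c < fmax → ∀ a b : {x : V // ¬ p x},
        (lsub (ple LB) F'B c).Reachable a b ↔ (lsub (ple L) F' c).Reachable ↑a ↑b := by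
      intro c hc a b
      have hgraph : lsub (ple LB) F'B c =
          (lsub (ple L) F' c).comap (Subtype.val : {x : V // ¬ p x} → V) := by
        ext a b
        constructor
        · rintro ⟨hadj, hval⟩
          refine ⟨hleB ((hpleB'mem_adj a b).mpr hadj), ?_⟩
          have hv : F'.f₁ s((↑a : V), ↑b) = F'B.f₁ s(a, b) := by
            rw [← Sym2.map_pair_eq Subtype.val]
            exact hvalB' s(a, b)
          rw [hv]
          exact hval
        · rintro ⟨hadj, hval⟩
          rcases hG'class _ _ hadj with h | h | h
          · exact absurd a.2 (not_not_intro (hLA'mem _ (ple_adj_mem h).1))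
          · refine ⟨(hpleB'mem_adj a b).mp h, ?_⟩
            rwa [← Sym2.map_pair_eq Subtype.val, hvalB'] at hval
          · exfalso
            rw [h, hvalconn] at hval
            exact absurd hval (not_le.mpr hc)
      rw [hgraph]
      exact comap_reachable (hclKG'n c hc) a b
    -- strict sublevel versions (ple side)
    have hclKS' : ∀ c : ℝ, c ≤ fmax → ∀ x y : V, (ssub (ple L) F' c).Adj x y → p x → p y := by
      intro c hc x y hxy hx
      rcases hG'class x y hxy.1 with h | h | h
      · exact hLA'mem y (ple_adj_mem h).2
      · exact absurd hx (hLB'mem x (ple_adj_mem h).1)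
      · exfalso
        have h2 := hxy.2
        rw [h, hvalconn] at h2
        exact absurd h2 (not_lt.mpr hc)
    have hclKS'n : ∀ c : ℝ, c ≤ fmax → ∀ x y : V, (ssub (ple L) F' c).Adj x y → ¬ p x → ¬ p y :=
      fun c hc x y hxy hx hy => hx (hclKS' c hc y x hxy.symm hy)
    have hssubA' : ∀ c : ℝ, c ≤ fmax → ∀ a b : Subtype p,
        (ssub (ple LA) F'A c).Reachable a b ↔ (ssub (ple L) F' c).Reachable ↑a ↑b := by
      intro c hc a b
      have hgraph : ssub (ple LA) F'A c =
          (ssub (ple L) F' c).comap (Subtype.val : Subtype p → V) := by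
        ext a b
        constructor
        · rintro ⟨hadj, hval⟩
          refine ⟨hleA ((hpleA'mem_adj a b).mpr hadj), ?_⟩
          have hv : F'.f₁ s((↑a : V), ↑b) = F'A.f₁ s(a, b) := by
            rw [← Sym2.map_pair_eq Subtype.val]
            exact hvalA' s(a, b)
          rw [hv]
          exact hval
        · rintro ⟨hadj, hval⟩
          rcases hG'class _ _ hadj with h | h | h
          · refine ⟨(hpleA'mem_adj a b).mp h, ?_⟩
            rwa [← Sym2.map_pair_eq Subtype.val, hvalA'] at hval
          · exact absurd a.2 (hLB'mem _ (ple_adj_mem h).1)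
          · exfalso
            rw [h, hvalconn] at hval
            exact absurd hval (not_lt.mpr hc)
      rw [hgraph]
      exact comap_reachable (hclKS' c hc) a b
    have hssubB' : ∀ c : ℝ, c ≤ fmax → ∀ a b : {x : V // ¬ p x},
        (ssub (ple LB) F'B c).Reachable a b ↔ (ssub (ple L) F' c).Reachable ↑a ↑b := by
      intro c hc a b
      have hgraph : ssub (ple LB) F'B c =
          (ssub (ple L) F' c).comap (Subtype.val : {x : V // ¬ p x} → V) := by
        ext a b
        constructor
        · rintro ⟨hadj, hval⟩
          refine ⟨hleB ((hpleB'mem_adj a b).mpr hadj), ?_⟩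
          have hv : F'.f₁ s((↑a : V), ↑b) = F'B.f₁ s(a, b) := by
            rw [← Sym2.map_pair_eq Subtype.val]
            exact hvalB' s(a, b)
          rw [hv]
          exact hval
        · rintro ⟨hadj, hval⟩
          rcases hG'class _ _ hadj with h | h | h
          · exact absurd a.2 (not_not_intro (hLA'mem _ (ple_adj_mem h).1))
          · refine ⟨(hpleB'mem_adj a b).mp h, ?_⟩
            rwa [← Sym2.map_pair_eq Subtype.val, hvalB'] at hval
          · exfalso
            rw [h, hvalconn] at hval
            exact absurd hval (not_lt.mpr hc)
      rw [hgraph]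
      exact comap_reachable (hclKS'n c hc) a b
    -- auxiliary value bounds
    have hGAvallt : ∀ eA ∈ (H.comap (Subtype.val : Subtype p → V)).edgeSet,
        FA.f₁ eA < fmax := by
      intro eA heA
      have h1 := hGAedge _ heA
      have hne : Sym2.map Subtype.val eA ≠ s(u, w) := by
        intro hh
        exact hpw (sym2_map_val_p eA w (by rw [hh]; simp))
      have h2 := hvalltmax _ h1 hne
      rw [hFA]
      simp only
      exact h2
    have hGBvallt : ∀ eB ∈ (H.comap (Subtype.val : {x : V // ¬ p x} → V)).edgeSet,
        FB.f₁ eB < fmax := by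
      intro eB heB
      have h1 := hGBedge _ heB
      have hne : Sym2.map Subtype.val eB ≠ s(u, w) := by
        intro hh
        exact (sym2_map_val_p eB u (by rw [hh]; simp)) hpu
      have h2 := hvalltmax _ h1 hne
      rw [hFB]
      simp only
      exact h2
    have hpleAval : ∀ e' ∈ (ple LA).edgeSet, F'A.f₁ e' < fmax := by
      intro e' he'
      obtain ⟨eA, heA, rfl⟩ := hcmA4 e' he'
      rw [hcmA6 _ heA]
      exact hGAvallt _ heA
    have hpleBval : ∀ e' ∈ (ple LB).edgeSet, F'B.f₁ e' < fmax := by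
      intro e' he'
      obtain ⟨eB, heB, rfl⟩ := hcmB4 e' he'
      rw [hcmB6 _ heB]
      exact hGBvallt _ heB
    -- if the max value is attained by a vertex of a side, that side is a singleton
    have hsingA : F.f₀ u = fmax → ∀ a : Subtype p, a = ⟨u, hpu⟩ := by
      intro hval a
      by_contra hne
      obtain ⟨z, hz⟩ := exists_adj_of_reachable
        (htreeA.isConnected.preconnected ⟨u, hpu⟩ a) (fun hh => hne hh.symm)
      have h1 : s((⟨u, hpu⟩ : Subtype p), z) ∈
          (H.comap (Subtype.val : Subtype p → V)).edgeSet := (SimpleGraph.mem_edgeSet _).mpr hz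
      have h2 : F.f₀ u ≤ FA.f₁ s((⟨u, hpu⟩ : Subtype p), z) := hdmfA.1 _ h1 ⟨u, hpu⟩ (by simp)
      have h3 := hGAvallt _ h1
      exact absurd hval (ne_of_lt (lt_of_le_of_lt h2 h3))
    have hsingB : F.f₀ w = fmax → ∀ b : {x : V // ¬ p x}, b = ⟨w, hpw⟩ := by
      intro hval b
      by_contra hne
      obtain ⟨z, hz⟩ := exists_adj_of_reachable
        (htreeB.isConnected.preconnected ⟨w, hpw⟩ b) (fun hh => hne hh.symm)
      have h1 : s((⟨w, hpw⟩ : {x : V // ¬ p x}), z) ∈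
          (H.comap (Subtype.val : {x : V // ¬ p x} → V)).edgeSet :=
        (SimpleGraph.mem_edgeSet _).mpr hz
      have h2 : F.f₀ w ≤ FB.f₁ s((⟨w, hpw⟩ : {x : V // ¬ p x}), z) := hdmfB.1 _ h1 ⟨w, hpw⟩ (by simp)
      have h3 := hGBvallt _ h1
      exact absurd hval (ne_of_lt (lt_of_le_of_lt h2 h3))
    -- every vertex is incident to an edge
    have hall_inc : ∀ x : V, ∃ e ∈ G.edgeSet, x ∈ e := by
      intro x
      obtain ⟨y, hyx⟩ := Fintype.exists_ne_of_one_lt_card hcard1 x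
      obtain ⟨z, hz⟩ := exists_adj_of_reachable (hT.isConnected.preconnected x y) (Ne.symm hyx)
      exact ⟨s(x, z), (SimpleGraph.mem_edgeSet _).mpr hz, by simp⟩
    have hf0max : ∀ x : V, F.f₀ x ≤ fmax := by
      intro x
      obtain ⟨e, he, hxe⟩ := hall_inc x
      exact le_trans (hF.1 e he x hxe) (hvalmax e he)
    -- Sym2-level classification of edges of ple L
    have hG'classE : ∀ e' ∈ (ple L).edgeSet,
        (∃ eA ∈ (ple LA).edgeSet, e' = Sym2.map Subtype.val eA) ∨
        (∃ eB ∈ (ple LB).edgeSet, e' = Sym2.map Subtype.val eB) ∨ e' = econn := by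
      intro e'
      induction e' using Sym2.ind with
      | _ x y =>
        intro he'
        rw [SimpleGraph.mem_edgeSet] at he'
        rcases hG'class x y he' with h | h | h
        · obtain ⟨a, b, rfl, rfl, hab⟩ := hpleA'adj _ _ h
          exact Or.inl ⟨s(a, b), (SimpleGraph.mem_edgeSet _).mpr hab, (Sym2.map_pair_eq _ _ _).symm⟩
        · obtain ⟨a, b, rfl, rfl, hab⟩ := hpleB'adj _ _ h
          exact Or.inr (Or.inl ⟨s(a, b), (SimpleGraph.mem_edgeSet _).mpr hab,
            (Sym2.map_pair_eq _ _ _).symm⟩)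
        · exact Or.inr (Or.inr h)
    have hLne : L ≠ [] := by
      intro hh
      have := hLcov u
      rw [hh] at this
      simp at this
    have htreeL := ple_isTree hLne hLnd hLcov
    -- small monotonicity facts into the strict sublevel at fmax
    have hmonoA : ple LA' ≤ ssub (ple L) F' fmax := by
      intro x y h
      obtain ⟨a, b, rfl, rfl, hab⟩ := hpleA'adj _ _ h
      refine ⟨hleA h, ?_⟩
      rw [← Sym2.map_pair_eq Subtype.val, hvalA']
      exact hpleAval s(a, b) ((SimpleGraph.mem_edgeSet _).mpr hab)
    have hmonoB : ple LB' ≤ ssub (ple L) F' fmax := by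
      intro x y h
      obtain ⟨a, b, rfl, rfl, hab⟩ := hpleB'adj _ _ h
      refine ⟨hleB h, ?_⟩
      rw [← Sym2.map_pair_eq Subtype.val, hvalB']
      exact hpleBval s(a, b) ((SimpleGraph.mem_edgeSet _).mpr hab)
    have huLA' : u ∈ LA' := by
      rw [hLA', List.mem_map]
      exact ⟨⟨u, hpu⟩, hLAcov _, rfl⟩
    have hwLB' : w ∈ LB' := by
      rw [hLB', List.mem_map]
      exact ⟨⟨w, hpw⟩, hLBcov _, rfl⟩
    have haendLA' : (↑aendA : V) ∈ LA' := by
      rw [hLA', List.mem_map]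
      exact ⟨aendA, by rw [haendA]; exact List.getLast_mem _, rfl⟩
    have hbheadLB' : (↑bheadB : V) ∈ LB' := by
      rw [hLB', List.mem_map]
      exact ⟨bheadB, by rw [hbheadB]; exact List.head_mem _, rfl⟩
    -- final assembly
    refine ⟨L, F', φe, hLnd, hLcov, ?_, ?_⟩
    · -- IsDMF (ple L) F'
      refine ⟨?_, hF.2.1, ?_, ?_⟩
      · -- weakly increasing
        intro e' he' v hv
        rcases hG'classE e' he' with ⟨eA, heA, rfl⟩ | ⟨eB, heB, rfl⟩ | rfl
        · obtain ⟨a, ha, rfl⟩ := Sym2.mem_map.mp hv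
          rw [hvalA']
          have h1 := hdmfA'.1 eA heA a ha
          rw [hcmA5' a] at h1
          exact h1
        · obtain ⟨a, ha, rfl⟩ := Sym2.mem_map.mp hv
          rw [hvalB']
          have h1 := hdmfB'.1 eB heB a ha
          rw [hcmB5' a] at h1
          exact h1
        · rw [hvalconn]
          exact hf0max v
      · -- injectivity of f₁ on edges
        intro e₁' h₁' e₂' h₂' heq
        obtain ⟨e₁, he₁, rfl⟩ := hφe_surj e₁' h₁'
        obtain ⟨e₂, he₂, rfl⟩ := hφe_surj e₂' h₂'
        rw [(hφe_edge e₁ he₁).2, (hφe_edge e₂ he₂).2] at heq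
        rw [hF.2.2.1 e₁ he₁ e₂ he₂ heq]
      · -- matching values only for incidences
        intro v e' he' heq
        obtain ⟨e, he, rfl⟩ := hφe_surj e' he'
        rw [(hφe_edge e he).2] at heq
        have hve : v ∈ e := hF.2.2.2 v e he heq
        by_cases hcase : e = s(u, w)
        · subst hcase
          rw [hφemax, heconn]
          rcases Sym2.mem_iff.mp hve with rfl | rfl
          · have h1 : (↑aendA : V) = v := congrArg Subtype.val (hsingA heq aendA)
            rw [h1]
            simp
          · have h1 : (↑bheadB : V) = v := congrArg Subtype.val (hsingB heq bheadB)
            rw [h1]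
            simp
        · rcases hGclassE e he hcase with hall | hall
          · rw [hφeAdef e he hall]
            have hpv : p v := hall v hve
            have hmm : (⟨v, hpv⟩ : Subtype p) ∈ Sym2.map rA e :=
              Sym2.mem_map.mpr ⟨v, hve, by rw [hrA]; simp only [dif_pos hpv]⟩
            have h1 : φeA (Sym2.map rA e) ∈ (ple LA).edgeSet := hcmA2 _ (hliftA e he hall).1
            have h2 : F'A.f₀ ⟨v, hpv⟩ = F'A.f₁ (φeA (Sym2.map rA e)) := by
              rw [hcmA5', hcmA6 _ (hliftA e he hall).1, hFA]
              simp only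
              rw [(hliftA e he hall).2.1]
              exact heq
            have h3 := hdmfA'.2.2.2 ⟨v, hpv⟩ _ h1 h2
            exact Sym2.mem_map.mpr ⟨⟨v, hpv⟩, h3, rfl⟩
          · rw [hφeBdef e he hall]
            have hpv : ¬ p v := hall v hve
            have hmm : (⟨v, hpv⟩ : {x : V // ¬ p x}) ∈ Sym2.map rB e :=
              Sym2.mem_map.mpr ⟨v, hve, by rw [hrB]; simp only [dif_pos hpv]⟩
            have h1 : φeB (Sym2.map rB e) ∈ (ple LB).edgeSet := hcmB2 _ (hliftB e he hall).1
            have h2 : F'B.f₀ ⟨v, hpv⟩ = F'B.f₁ (φeB (Sym2.map rB e)) := by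
              rw [hcmB5', hcmB6 _ (hliftB e he hall).1, hFB]
              simp only
              rw [(hliftB e he hall).2.1]
              exact heq
            have h3 := hdmfB'.2.2.2 ⟨v, hpv⟩ _ h1 h2
            exact Sym2.mem_map.mpr ⟨⟨v, hpv⟩, h3, rfl⟩
    · -- CmEquiv
      refine ⟨Function.bijective_id, fun e he => (hφe_edge e he).1, hφe_inj, hφe_surj,
        fun v => rfl, fun e he => (hφe_edge e he).2, ?_, ?_, ?_⟩
      · -- condition 7: sublevel reachability
        intro c x y
        show (lsub G F c).Reachable x y ↔ (lsub (ple L) F' c).Reachable x y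
        by_cases hc : c < fmax
        · by_cases hx : p x <;> by_cases hy : p y
          · exact ((hlsubGA c hc ⟨x, hx⟩ ⟨y, hy⟩).symm.trans
              ((hcmA7 c ⟨x, hx⟩ ⟨y, hy⟩).trans (hlsubA' c hc ⟨x, hx⟩ ⟨y, hy⟩)))
          · exact iff_of_false (fun hr => hy (reach_invariant (hclKG c hc) hr hx))
              (fun hr => hy (reach_invariant (hclKG' c hc) hr hx))
          · exact iff_of_false (fun hr => (reach_invariant (hclKGn c hc) hr hx) hy)
              (fun hr => (reach_invariant (hclKG'n c hc) hr hx) hy)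
          · exact ((hlsubGB c hc ⟨x, hx⟩ ⟨y, hy⟩).symm.trans
              ((hcmB7 c ⟨x, hx⟩ ⟨y, hy⟩).trans (hlsubB' c hc ⟨x, hx⟩ ⟨y, hy⟩)))
        · have hc' : fmax ≤ c := not_lt.mp hc
          have hle1 : G ≤ lsub G F c := by
            intro x y h
            exact ⟨h, le_trans (hvalmax _ ((SimpleGraph.mem_edgeSet _).mpr h)) hc'⟩
          have hle2 : ple L ≤ lsub (ple L) F' c := by
            intro x y h
            refine ⟨h, ?_⟩
            obtain ⟨e, he, heq⟩ := hφe_surj s(x, y) ((SimpleGraph.mem_edgeSet _).mpr h)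
            have h2 := (hφe_edge e he).2
            rw [heq] at h2
            rw [h2]
            exact le_trans (hvalmax e he) hc'
          exact iff_of_true ((hT.isConnected.preconnected x y).mono hle1)
            ((htreeL.isConnected.preconnected x y).mono hle2)
      · -- condition 8
        intro e he u0 hu0
        by_cases hcase : e = s(u, w)
        · subst hcase
          rw [hφemax, heconn]
          rcases Sym2.mem_iff.mp hu0 with rfl | rfl
          · refine ⟨↑aendA, by simp, ?_⟩
            exact (ple_reachable hLA'nd huLA' haendLA').mono hmonoA
          · refine ⟨↑bheadB, by simp, ?_⟩
            exact (ple_reachable hLB'nd hwLB' hbheadLB').mono hmonoB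
        · rcases hGclassE e he hcase with hall | hall
          · rw [hφeAdef e he hall]
            have hmem := (hliftA e he hall).1
            have hpu0 : p u0 := hall u0 hu0
            have hmm : (⟨u0, hpu0⟩ : Subtype p) ∈ Sym2.map rA e :=
              Sym2.mem_map.mpr ⟨u0, hu0, by rw [hrA]; simp only [dif_pos hpu0]⟩
            obtain ⟨u', hu', hreach⟩ := hcmA8 _ hmem ⟨u0, hpu0⟩ hmm
            refine ⟨↑u', Sym2.mem_map.mpr ⟨u', hu', rfl⟩, ?_⟩
            have hval : FA.f₁ (Sym2.map rA e) = F.f₁ e := by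
              rw [hFA]
              simp only
              rw [(hliftA e he hall).2.1]
            rw [hval] at hreach
            exact (hssubA' (F.f₁ e) (hvalmax e he) ⟨u0, hpu0⟩ u').mp hreach
          · rw [hφeBdef e he hall]
            have hmem := (hliftB e he hall).1
            have hpu0 : ¬ p u0 := hall u0 hu0
            have hmm : (⟨u0, hpu0⟩ : {x : V // ¬ p x}) ∈ Sym2.map rB e :=
              Sym2.mem_map.mpr ⟨u0, hu0, by rw [hrB]; simp only [dif_pos hpu0]⟩
            obtain ⟨u', hu', hreach⟩ := hcmB8 _ hmem ⟨u0, hpu0⟩ hmm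
            refine ⟨↑u', Sym2.mem_map.mpr ⟨u', hu', rfl⟩, ?_⟩
            have hval : FB.f₁ (Sym2.map rB e) = F.f₁ e := by
              rw [hFB]
              simp only
              rw [(hliftB e he hall).2.1]
            rw [hval] at hreach
            exact (hssubB' (F.f₁ e) (hvalmax e he) ⟨u0, hpu0⟩ u').mp hreach
      · -- condition 9
        intro e he u' hu'
        by_cases hcase : e = s(u, w)
        · subst hcase
          rw [hφemax, heconn] at hu'
          rcases Sym2.mem_iff.mp hu' with rfl | rfl
          · refine ⟨u, by simp, ?_⟩
            exact ((ple_reachable hLA'nd huLA' haendLA').mono hmonoA).symm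
          · refine ⟨w, by simp, ?_⟩
            exact ((ple_reachable hLB'nd hwLB' hbheadLB').mono hmonoB).symm
        · rcases hGclassE e he hcase with hall | hall
          · rw [hφeAdef e he hall] at hu'
            have hmem := (hliftA e he hall).1
            obtain ⟨a', ha', rfl⟩ := Sym2.mem_map.mp hu'
            obtain ⟨u0A, hu0A, hreach⟩ := hcmA9 _ hmem a' ha'
            refine ⟨↑u0A, ?_, ?_⟩
            · have hmm : (↑u0A : V) ∈ Sym2.map Subtype.val (Sym2.map rA e) :=
                Sym2.mem_map.mpr ⟨u0A, hu0A, rfl⟩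
              rwa [(hliftA e he hall).2.1] at hmm
            · have hval : FA.f₁ (Sym2.map rA e) = F.f₁ e := by
                rw [hFA]
                simp only
                rw [(hliftA e he hall).2.1]
              rw [hval] at hreach
              exact (hssubA' (F.f₁ e) (hvalmax e he) a' u0A).mp hreach
          · rw [hφeBdef e he hall] at hu'
            have hmem := (hliftB e he hall).1
            obtain ⟨a', ha', rfl⟩ := Sym2.mem_map.mp hu'
            obtain ⟨u0B, hu0B, hreach⟩ := hcmB9 _ hmem a' ha'
            refine ⟨↑u0B, ?_, ?_⟩
            · have hmm : (↑u0B : V) ∈ Sym2.map Subtype.val (Sym2.map rB e) :=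
                Sym2.mem_map.mpr ⟨u0B, hu0B, rfl⟩
              rwa [(hliftB e he hall).2.1] at hmm
            · have hval : FB.f₁ (Sym2.map rB e) = F.f₁ e := by
                rw [hFB]
                simp only
                rw [(hliftB e he hall).2.1]
              rw [hval] at hreach
              exact (hssubB' (F.f₁ e) (hvalmax e he) a' u0B).mp hreach


/-- Every discrete Morse function on a tree is cm-equivalent to a discrete Morse
function on a path (a tree all of whose vertices have degree at most two; note that a
path on the same vertex set has the same number of simplices). -/
theorem stmt16 {V : Type*} [Fintype V] (G : SimpleGraph V) (hG : G.IsTree)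
    (F : PreDMF V) (hF : IsDMF G F) :
    ∃ (G' : SimpleGraph V) (F' : PreDMF V) (φv : V → V) (φe : Sym2 V → Sym2 V),
      G'.IsTree ∧ (∀ v : V, {w : V | G'.Adj v w}.ncard ≤ 2) ∧
      IsDMF G' F' ∧ CmEquiv G F G' F' φv φe := by
  classical
  obtain ⟨L, F', φe, hnd, hcov, hdmf, hcm⟩ := Aux (Fintype.card V) V G F rfl hG hF
  have hLne : L ≠ [] := by
    obtain ⟨v⟩ : Nonempty V := hG.isConnected.nonempty
    intro hh
    have := hcov v
    rw [hh] at this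
    simp at this
  exact ⟨ple L, F', id, φe, ple_isTree hLne hnd hcov, fun v => ple_degree hnd v, hdmf, hcm⟩
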